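/- Under the standing hypotheses, let ℋ ∈ Sub_gt(𝒢) have decomposition into connected components ℋ = ℋ₁ ∪̇ … ∪̇ ℋ_r with ℋ_j the full subgroupoid of ℋ on Y_j, where ℋ₀ = Y₁ ∪̇ … ∪̇ Y_r, let S_j := ⊕_{y∈Y_j} S_y and S^c_ℋ := ⊕_{y∈𝒢₀∖ℋ₀} S_y, and choose y_j ∈ Y_j for each j. Then S^{α_ℋ} = (⊕_{j=1}^r S_j^{α_{ℋ_j}}) ⊕ S^c_ℋ, and this ring is isomorphic to (⊕_{j=1}^r S_{y_j}^{α_{ℋ_j(y_j)}}) ⊕ S^c_ℋ. -/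

import Mathlib

open CategoryTheory

namespace PaperGalois

/-- A unital partial action of a groupoid (with object/morphism data given by a
`CategoryTheory.Groupoid` structure on `Obj`) on a commutative ring `S`.
For a morphism `g : a ⟶ b` (source `a`, target `b`), `e g` is the central idempotent
with `S_g = S • e g`, and `act g s` encodes `α_g(s · 1_{g⁻¹})`. -/
structure UPA (Obj : Type*) [Groupoid Obj] (S : Type*) [CommRing S] where
  e : ∀ ⦃a b : Obj⦄, (a ⟶ b) → S
  act : ∀ ⦃a b : Obj⦄, (a ⟶ b) → S → S
  idem : ∀ ⦃a b : Obj⦄ (g : a ⟶ b), e g * e g = e g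
  e_le : ∀ ⦃a b : Obj⦄ (g : a ⟶ b), e g * e (𝟙 b) = e g
  act_proj : ∀ ⦃a b : Obj⦄ (g : a ⟶ b) (s : S), act g (s * e (Groupoid.inv g)) = act g s
  act_mem : ∀ ⦃a b : Obj⦄ (g : a ⟶ b) (s : S), act g s * e g = act g s
  act_add : ∀ ⦃a b : Obj⦄ (g : a ⟶ b) (s t : S), act g (s + t) = act g s + act g t
  act_mul : ∀ ⦃a b : Obj⦄ (g : a ⟶ b) (s t : S), act g (s * t) = act g s * act g t
  act_unit : ∀ ⦃a b : Obj⦄ (g : a ⟶ b), act g (e (Groupoid.inv g)) = e g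
  act_id : ∀ (a : Obj) (s : S), act (𝟙 a) s = s * e (𝟙 a)
  act_inv : ∀ ⦃a b : Obj⦄ (g : a ⟶ b) (s : S),
      act (Groupoid.inv g) (act g s) = s * e (Groupoid.inv g)
  act_comp : ∀ ⦃a b c : Obj⦄ (h : a ⟶ b) (g : b ⟶ c) (s : S),
      act g (act h s) = act (h ≫ g) s * e g

namespace UPA

variable {Obj : Type*} [Groupoid Obj] {S : Type*} [CommRing S] (α : UPA Obj S)

lemma act_zero ⦃a b : Obj⦄ (g : a ⟶ b) : α.act g 0 = 0 := by
  have h := α.act_add g 0 0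
  rw [add_zero] at h
  exact (left_eq_add.mp h)

lemma act_neg ⦃a b : Obj⦄ (g : a ⟶ b) (s : S) : α.act g (-s) = -(α.act g s) := by
  have h := α.act_add g s (-s)
  rw [add_neg_cancel, α.act_zero] at h
  exact (eq_neg_of_add_eq_zero_right h.symm)

lemma act_one ⦃a b : Obj⦄ (g : a ⟶ b) : α.act g 1 = α.e g := by
  have h := α.act_proj g 1
  rw [one_mul, α.act_unit] at h
  exact h.symm

lemma act_e_src ⦃a b : Obj⦄ (g : a ⟶ b) : α.act g (α.e (𝟙 a)) = α.e g := by
  have h1 : α.e (𝟙 a) * α.e (Groupoid.inv g) = α.e (Groupoid.inv g) := by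
    rw [mul_comm]; exact α.e_le (Groupoid.inv g)
  have h2 := α.act_proj g (α.e (𝟙 a))
  rw [h1, α.act_unit] at h2
  exact h2.symm

/-- The set of `α`-invariant elements of `S` relative to a subgroupoid `H`:
`S^{α_H} = {s ∈ S : α_h(s·1_{h⁻¹}) = s·1_h for all h ∈ H}`. -/
def invSet (H : Subgroupoid Obj) : Set S :=
  {s : S | ∀ ⦃a b : Obj⦄ (h : a ⟶ b), h ∈ H.arrows a b → α.act h s = s * α.e h}

/-- The invariants `S_y^{α_A}` of the corner ring `S_y = S·1_y` under a set `A`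
of loops at `y`. -/
def grpInvSet (y : Obj) (A : Set (y ⟶ y)) : Set S :=
  {s : S | s * α.e (𝟙 y) = s ∧ ∀ g ∈ A, α.act g s = s * α.e g}

/-- The arrows `a ⟶ b` of the groupoid acting trivially on the subset `T ⊆ S`;
for `T` a subring this gives `𝒢_T`. -/
def fixingSet (T : Set S) (a b : Obj) : Set (a ⟶ b) :=
  {g : a ⟶ b | ∀ t ∈ T, α.act g t = t * α.e g}

/-- `⊕_{y ∈ Z} S_y`, the part of `S` supported on a set `Z` of objects. -/
def partSet (Z : Set Obj) : Set S :=
  {s : S | ∀ y : Obj, y ∉ Z → s * α.e (𝟙 y) = 0}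

/-- `T·1_y ⊆ S_y` for a subset `T ⊆ S`. -/
def cornerSet (T : Set S) (y : Obj) : Set S :=
  (fun t => t * α.e (𝟙 y)) '' T

/-- `T' ⊆ S_y` is `α_{𝒢(y,z)}`-strong. -/
def strongAt (T' : Set S) (a b : Obj) : Prop :=
  ∀ g h : a ⟶ b, (h ≫ Groupoid.inv g) ∉ α.fixingSet T' a a →
    ∀ f : S, f * f = f → f ≠ 0 → (f * α.e g = f ∨ f * α.e h = f) →
      ∃ t ∈ T', α.act g t * f ≠ α.act h t * f

/-- `T ⊆ S` is `α`-strong. -/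
def IsStrong (T : Set S) : Prop :=
  ∀ a b : Obj, α.strongAt (α.cornerSet T a) a b

/-- Existence of a partial Galois coordinate system for the restriction of `α` to the
subgroupoid `H` acting on `S_H ⊆ S` (for `H = ⊤`, `Sub = univ` this says that
`S^{α_𝒢} ⊆ S` is an `α_𝒢`-partial Galois extension). -/
def IsGaloisCoordSystem (H : Subgroupoid Obj) (Sub : Set S) : Prop :=
  ∃ (m : ℕ) (av bv : Fin m → S),
    (∀ i, av i ∈ Sub) ∧ (∀ i, bv i ∈ Sub) ∧
    (∀ ⦃a b : Obj⦄ (g : a ⟶ b), g ∈ H.arrows a b → a ≠ b →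
        ∑ i, av i * α.act g (bv i) = 0) ∧
    (∀ (a : Obj) (g : a ⟶ a), g ∈ H.arrows a a → g ≠ 𝟙 a →
        ∑ i, av i * α.act g (bv i) = 0) ∧
    (∀ a : Obj, a ∈ H.objs → ∑ i, av i * α.act (𝟙 a) (bv i) = α.e (𝟙 a))

/-- Group-type condition for the restriction of `α` to `H`, at the base object `u`:
there is a transversal (inside `H`) from `u` to every object of the `H`-component of `u`
whose ideals are as large as possible. -/
def IsGroupTypeAt (H : Subgroupoid Obj) (u : Obj) : Prop :=
  ∃ σ : ∀ v : Obj, (H.arrows u v).Nonempty → (u ⟶ v),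
    (∀ v hv, σ v hv ∈ H.arrows u v) ∧
    (∀ h, σ u h = 𝟙 u) ∧
    (∀ v hv, α.e (Groupoid.inv (σ v hv)) = α.e (𝟙 u) ∧ α.e (σ v hv) = α.e (𝟙 v))

/-- The restriction `α_H` of `α` to the subgroupoid `H` is of group-type. -/
def IsGroupType (H : Subgroupoid Obj) : Prop :=
  ∀ u ∈ H.objs, α.IsGroupTypeAt H u

end UPA

structure SubCorner (S : Type*) [CommRing S] where
  carrier : Set S
  unit : S
  unit_mem : unit ∈ carrier
  mul_unit : ∀ s ∈ carrier, s * unit = s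
  add_mem : ∀ ⦃s t : S⦄, s ∈ carrier → t ∈ carrier → s + t ∈ carrier
  mul_mem : ∀ ⦃s t : S⦄, s ∈ carrier → t ∈ carrier → s * t ∈ carrier
  neg_mem : ∀ ⦃s : S⦄, s ∈ carrier → -s ∈ carrier
  zero_mem : (0 : S) ∈ carrier

namespace SubCorner

variable {S : Type*} [CommRing S]

lemma nsmul_mem (P : SubCorner S) (n : ℕ) {s : S} (hs : s ∈ P.carrier) :
    n • s ∈ P.carrier := by
  induction n with
  | zero => simpa using P.zero_mem
  | succ n ih => rw [succ_nsmul]; exact P.add_mem ih hs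

lemma zsmul_mem (P : SubCorner S) (n : ℤ) {s : S} (hs : s ∈ P.carrier) :
    n • s ∈ P.carrier := by
  cases n with
  | ofNat n => simpa [natCast_zsmul] using P.nsmul_mem n hs
  | negSucc n => rw [negSucc_zsmul]; exact P.neg_mem (P.nsmul_mem (n+1) hs)

instance (P : SubCorner S) : CommRing ↥P.carrier where
  add a b := ⟨a.1 + b.1, P.add_mem a.2 b.2⟩
  mul a b := ⟨a.1 * b.1, P.mul_mem a.2 b.2⟩
  neg a := ⟨-a.1, P.neg_mem a.2⟩
  zero := ⟨0, P.zero_mem⟩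
  one := ⟨P.unit, P.unit_mem⟩
  add_assoc a b c := Subtype.ext (add_assoc _ _ _)
  zero_add a := Subtype.ext (zero_add _)
  add_zero a := Subtype.ext (add_zero _)
  add_comm a b := Subtype.ext (add_comm _ _)
  mul_assoc a b c := Subtype.ext (mul_assoc _ _ _)
  one_mul a := Subtype.ext (by
    show P.unit * a.1 = a.1
    rw [mul_comm]; exact P.mul_unit a.1 a.2)
  mul_one a := Subtype.ext (P.mul_unit a.1 a.2)
  left_distrib a b c := Subtype.ext (left_distrib _ _ _)
  right_distrib a b c := Subtype.ext (right_distrib _ _ _)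
  mul_comm a b := Subtype.ext (mul_comm _ _)
  zero_mul a := Subtype.ext (zero_mul _)
  mul_zero a := Subtype.ext (mul_zero _)
  neg_add_cancel a := Subtype.ext (neg_add_cancel _)
  nsmul n a := ⟨n • a.1, P.nsmul_mem n a.2⟩
  nsmul_zero a := Subtype.ext (zero_nsmul _)
  nsmul_succ n a := Subtype.ext (succ_nsmul _ _)
  zsmul n a := ⟨n • a.1, P.zsmul_mem n a.2⟩
  zsmul_zero' a := Subtype.ext (zero_zsmul _)
  zsmul_succ' n a := Subtype.ext (by
    show ((n.succ : ℤ)) • a.1 = (n : ℤ) • a.1 + a.1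
    rw [Int.natCast_succ, add_zsmul, one_zsmul])
  zsmul_neg' n a := Subtype.ext (by
    show (Int.negSucc n) • a.1 = -(((n.succ : ℤ)) • a.1)
    rw [negSucc_zsmul]
    norm_cast)

def incl {P Q : SubCorner S} (hle : P.carrier ⊆ Q.carrier) (hu : P.unit = Q.unit) :
    ↥P.carrier →+* ↥Q.carrier where
  toFun a := ⟨a.1, hle a.2⟩
  map_one' := Subtype.ext hu
  map_mul' _ _ := rfl
  map_zero' := rfl
  map_add' _ _ := rfl

def IsSepExt (P Q : SubCorner S) (hle : P.carrier ⊆ Q.carrier) (hu : P.unit = Q.unit) : Prop :=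
  letI : Algebra ↥P.carrier ↥Q.carrier := (incl hle hu).toAlgebra
  ∃ ε : TensorProduct ↥P.carrier ↥Q.carrier ↥Q.carrier,
    (∀ t : ↥Q.carrier,
        (TensorProduct.tmul ↥P.carrier t (1 : ↥Q.carrier)) * ε
          = ε * (TensorProduct.tmul ↥P.carrier (1 : ↥Q.carrier) t)) ∧
    LinearMap.mul' ↥P.carrier ↥Q.carrier ε = 1

end SubCorner

/-- A `Subring` of `S`, seen as a corner subring with identity `1`. -/
def Subring.toSC {S : Type*} [CommRing S] (T : Subring S) : SubCorner S where
  carrier := (T : Set S)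
  unit := 1
  unit_mem := T.one_mem
  mul_unit := fun s _ => mul_one s
  add_mem := fun _ _ hs ht => T.add_mem hs ht
  mul_mem := fun _ _ hs ht => T.mul_mem hs ht
  neg_mem := fun _ hs => T.neg_mem hs
  zero_mem := T.zero_mem

namespace UPA

variable {Obj : Type*} [Groupoid Obj] {S : Type*} [CommRing S] (α : UPA Obj S)

lemma invSet_one_mem (H : Subgroupoid Obj) : (1 : S) ∈ α.invSet H :=
  fun _ _ h _ => by rw [α.act_one h, one_mul]

lemma invSet_zero_mem (H : Subgroupoid Obj) : (0 : S) ∈ α.invSet H :=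
  fun _ _ h _ => by rw [α.act_zero h, zero_mul]

lemma invSet_add_mem (H : Subgroupoid Obj) {s t : S} (hs : s ∈ α.invSet H)
    (ht : t ∈ α.invSet H) : s + t ∈ α.invSet H :=
  fun _ _ h hH => by rw [α.act_add h, hs h hH, ht h hH, add_mul]

lemma invSet_mul_mem (H : Subgroupoid Obj) {s t : S} (hs : s ∈ α.invSet H)
    (ht : t ∈ α.invSet H) : s * t ∈ α.invSet H :=
  fun _ _ h hH => by
    rw [α.act_mul h, hs h hH, ht h hH, mul_mul_mul_comm, α.idem h]

lemma invSet_neg_mem (H : Subgroupoid Obj) {s : S} (hs : s ∈ α.invSet H) :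
    -s ∈ α.invSet H :=
  fun _ _ h hH => by rw [α.act_neg h, hs h hH, neg_mul]

/-- The subring of invariants `S^{α_H}` of `S`, a genuine unital subring of `S`. -/
def invariantsSubring (H : Subgroupoid Obj) : Subring S where
  carrier := α.invSet H
  one_mem' := α.invSet_one_mem H
  zero_mem' := α.invSet_zero_mem H
  add_mem' := α.invSet_add_mem H
  mul_mem' := α.invSet_mul_mem H
  neg_mem' := α.invSet_neg_mem H

/-- `S^{α_H}` as a corner subring of `S` (with identity `1`). -/
def invariantsSC (H : Subgroupoid Obj) : SubCorner S where
  carrier := α.invSet H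
  unit := 1
  unit_mem := α.invSet_one_mem H
  mul_unit := fun s _ => mul_one s
  add_mem := fun _ _ hs ht => α.invSet_add_mem H hs ht
  mul_mem := fun _ _ hs ht => α.invSet_mul_mem H hs ht
  neg_mem := fun _ hs => α.invSet_neg_mem H hs
  zero_mem := α.invSet_zero_mem H

lemma grpInvSet_unit_mem (y : Obj) (A : Set (y ⟶ y)) :
    α.e (𝟙 y) ∈ α.grpInvSet y A := by
  refine ⟨α.idem (𝟙 y), fun g _ => ?_⟩
  rw [α.act_e_src g]
  have : α.e (𝟙 y) * α.e g = α.e g := by rw [mul_comm]; exact α.e_le g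
  rw [this]

/-- `S_y^{α_A}` as a corner subring of `S` (with identity `1_y`). -/
def grpInvSC (y : Obj) (A : Set (y ⟶ y)) : SubCorner S where
  carrier := α.grpInvSet y A
  unit := α.e (𝟙 y)
  unit_mem := α.grpInvSet_unit_mem y A
  mul_unit := fun _ hs => hs.1
  add_mem := fun s t hs ht =>
    ⟨by rw [add_mul, hs.1, ht.1], fun g hg => by
      rw [α.act_add g, hs.2 g hg, ht.2 g hg, add_mul]⟩
  mul_mem := fun s t hs ht =>
    ⟨by rw [mul_assoc, ht.1], fun g hg => by
      rw [α.act_mul g, hs.2 g hg, ht.2 g hg, mul_mul_mul_comm, α.idem g]⟩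
  neg_mem := fun s hs =>
    ⟨by rw [neg_mul, hs.1], fun g hg => by rw [α.act_neg g, hs.2 g hg, neg_mul]⟩
  zero_mem := ⟨zero_mul _, fun g _ => by rw [α.act_zero g, zero_mul]⟩

lemma invSet_le (H : Subgroupoid Obj) :
    α.invSet (Subgroupoid.full (Set.univ : Set Obj)) ⊆ α.invSet H :=
  fun _ hs _ _ h _ => hs h ⟨trivial, trivial⟩

lemma invSet_le_subring {T : Subring S}
    (h : ∀ s ∈ α.invSet (Subgroupoid.full (Set.univ : Set Obj)), s ∈ T) :
    (α.invariantsSC (Subgroupoid.full (Set.univ : Set Obj))).carrier ⊆ (Subring.toSC T).carrier :=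
  h

lemma grpInvSet_le (y : Obj) (A : Set (y ⟶ y)) :
    α.grpInvSet y (Set.univ : Set (y ⟶ y)) ⊆ α.grpInvSet y A :=
  fun _ hs => ⟨hs.1, fun g _ => hs.2 g trivial⟩

end UPA

/-- The restriction of a subgroupoid `H` to a set `Z` of objects (the full subgroupoid
of `H` on `Z`); for `Z` a connected component of `H` this is the corresponding
connected component subgroupoid `ℋ_j`. -/
def restrictTo {Obj : Type*} [Groupoid Obj] (H : Subgroupoid Obj) (Z : Set Obj) :
    Subgroupoid Obj where
  arrows a b := {g | g ∈ H.arrows a b ∧ a ∈ Z ∧ b ∈ Z}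
  inv := by
    intro a b p hp
    exact ⟨H.inv hp.1, hp.2.2, hp.2.1⟩
  mul := by
    intro a b c p hp q hq
    exact ⟨H.mul hp.1 hq.1, hp.2.1, hq.2.2⟩

namespace UPA

variable {Obj : Type*} [Groupoid Obj] {S : Type*} [CommRing S] (α : UPA Obj S)

lemma e_inv_src ⦃a b : Obj⦄ (g : a ⟶ b) :
    α.e (Groupoid.inv g) * α.e (𝟙 a) = α.e (Groupoid.inv g) :=
  α.e_le (Groupoid.inv g)

lemma act_mul_e_src ⦃a b : Obj⦄ (g : a ⟶ b) (t : S) :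
    α.act g (t * α.e (𝟙 a)) = α.act g t := by
  have key : t * α.e (𝟙 a) * α.e (Groupoid.inv g) = t * α.e (Groupoid.inv g) := by
    rw [mul_assoc, mul_comm (α.e (𝟙 a)), α.e_inv_src]
  have h1 := α.act_proj g (t * α.e (𝟙 a))
  have h2 := α.act_proj g t
  rw [key, h2] at h1
  exact h1.symm

lemma act_sum {ι : Type*} (t : Finset ι) ⦃a b : Obj⦄ (g : a ⟶ b) (f : ι → S) :
    α.act g (∑ i ∈ t, f i) = ∑ i ∈ t, α.act g (f i) := by
  classical
  induction t using Finset.induction_on with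
  | empty => simp [α.act_zero]
  | insert _ _ hni ih => rw [Finset.sum_insert hni, Finset.sum_insert hni, α.act_add, ih]

lemma act_kill (horth : ∀ y z : Obj, y ≠ z → α.e (𝟙 y) * α.e (𝟙 z) = 0)
    ⦃a b : Obj⦄ (g : a ⟶ b) (t : S) {u : Obj} (hu : u ≠ a) :
    α.act g (t * α.e (𝟙 u)) = 0 := by
  have h0 : t * α.e (𝟙 u) * α.e (𝟙 a) = 0 := by
    rw [mul_assoc, horth u a hu, mul_zero]
  rw [← α.act_mul_e_src g (t * α.e (𝟙 u)), h0, α.act_zero]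

lemma act_support (horth : ∀ y z : Obj, y ≠ z → α.e (𝟙 y) * α.e (𝟙 z) = 0)
    ⦃a b : Obj⦄ (g : a ⟶ b) (t : S) {u : Obj} (hu : u ≠ b) :
    α.act g t * α.e (𝟙 u) = 0 := by
  have h0 : α.e g * α.e (𝟙 u) = 0 := by
    rw [← α.e_le g, mul_assoc, horth b u (Ne.symm hu), mul_zero]
  rw [← α.act_mem g t, mul_assoc, h0, mul_zero]

lemma e_mul_obj (horth : ∀ y z : Obj, y ≠ z → α.e (𝟙 y) * α.e (𝟙 z) = 0)
    ⦃a b : Obj⦄ (g : a ⟶ b) {u : Obj} (hu : u ≠ b) :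
    α.e g * α.e (𝟙 u) = 0 := by
  have h := α.act_support horth g 1 hu
  rwa [α.act_one] at h

lemma e_absorb_comp ⦃x a b : Obj⦄ (g : x ⟶ a) (h : a ⟶ b) (hg : α.e g = α.e (𝟙 a)) :
    α.e (g ≫ h) * α.e h = α.e h := by
  have h1 := α.act_comp g h (1 : S)
  rw [α.act_one, α.act_one, hg, α.act_e_src] at h1
  exact h1.symm

lemma transport ⦃y0 a b : Obj⦄ (ga : y0 ⟶ a) (gb : y0 ⟶ b) (h : a ⟶ b)
    (hga : α.e ga = α.e (𝟙 a)) (hgb : α.e gb = α.e (𝟙 b)) (c : S)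
    (hck : α.act (ga ≫ h ≫ Groupoid.inv gb) c = c * α.e (ga ≫ h ≫ Groupoid.inv gb)) :
    α.act h (α.act ga c) = α.act gb c * α.e h := by
  have hkgb : (ga ≫ h ≫ Groupoid.inv gb) ≫ gb = ga ≫ h := by
    simp [Category.assoc, Groupoid.inv_comp]
  have h1 : α.act h (α.act ga c) = α.act (ga ≫ h) c * α.e h := α.act_comp ga h c
  have h3 : α.act gb (α.e (ga ≫ h ≫ Groupoid.inv gb)) = α.e (ga ≫ h) * α.e gb := by
    have h' := α.act_comp (ga ≫ h ≫ Groupoid.inv gb) gb (1 : S)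
    rw [α.act_one, α.act_one, hkgb] at h'
    exact h'
  have h2 := α.act_comp (ga ≫ h ≫ Groupoid.inv gb) gb c
  rw [hkgb, hck, α.act_mul, h3] at h2
  -- h2 : act gb c * (e (ga≫h) * e gb) = act (ga≫h) c * e gb
  have habs : α.e gb * α.e h = α.e h := by
    rw [hgb, mul_comm]; exact α.e_le h
  have h6 : α.e (ga ≫ h) * α.e h = α.e h := α.e_absorb_comp ga h hga
  calc α.act h (α.act ga c) = α.act (ga ≫ h) c * α.e h := h1
    _ = α.act (ga ≫ h) c * α.e gb * α.e h := by rw [mul_assoc, habs]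
    _ = α.act gb c * (α.e (ga ≫ h) * α.e gb) * α.e h := by rw [← h2]
    _ = α.act gb c * (α.e (ga ≫ h) * α.e h) * α.e gb := by ring
    _ = α.act gb c * α.e h * α.e gb := by rw [h6]
    _ = α.act gb c * (α.e gb * α.e h) := by ring
    _ = α.act gb c * α.e h := by rw [habs]

end UPA

/-- **Corollary 3.5.**  Standing hypotheses as before.  Let `ℋ ∈ Sub_gt(𝒢)` have
decomposition into connected components `ℋ = ℋ₁ ∪̇ … ∪̇ ℋ_r`, `ℋ_j` the full subgroupoid
of `ℋ` on `Y_j`, with `ℋ₀ = Y₁ ∪̇ … ∪̇ Y_r`, and choose `y_j ∈ Y_j`.  Then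
`S^{α_ℋ} = (⊕_{j=1}^r S_j^{α_{ℋ_j}}) ⊕ S^c_ℋ` (where `S_j = ⊕_{y ∈ Y_j} S_y` and
`S^c_ℋ = ⊕_{y ∉ ℋ₀} S_y`), and this ring is isomorphic (by an additive and multiplicative
bijection) to `(⊕_{j=1}^r S_{y_j}^{α_{ℋ_j(y_j)}}) ⊕ S^c_ℋ`. -/
theorem invariants_decomposition
    {Obj : Type*} [Groupoid Obj] [Fintype Obj] [∀ a b : Obj, Finite (a ⟶ b)]
    {S : Type*} [CommRing S] (α : UPA Obj S)
    (hsum : ∑ y : Obj, α.e (𝟙 y) = 1)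
    (horth : ∀ y z : Obj, y ≠ z → α.e (𝟙 y) * α.e (𝟙 z) = 0)
    (hconn : ∀ a b : Obj, Nonempty (a ⟶ b))
    (x : Obj) (τ : ∀ y : Obj, x ⟶ y) (hτx : τ x = 𝟙 x)
    (hgt : ∀ y : Obj, α.e (Groupoid.inv (τ y)) = α.e (𝟙 x) ∧ α.e (τ y) = α.e (𝟙 y))
    (H : Subgroupoid Obj) (hHgt : α.IsGroupType H)
    (r : ℕ) (Y : Fin r → Set Obj)
    (hYobjs : ∀ j, Y j ⊆ H.objs)
    (hYcover : ∀ u ∈ H.objs, ∃ j, u ∈ Y j)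
    (hYconn : ∀ j, ∀ u ∈ Y j, ∀ v ∈ Y j, (H.arrows u v).Nonempty)
    (hYdisj : ∀ j k, j ≠ k → ∀ u ∈ Y j, ∀ v ∈ Y k, H.arrows u v = ∅)
    (y : Fin r → Obj) (hy : ∀ j, y j ∈ Y j) :
    (α.invSet H =
      {s : S | ∃ (c : Fin r → S) (d : S),
        (∀ j, c j ∈ α.invSet (restrictTo H (Y j)) ∩ α.partSet (Y j)) ∧
        d ∈ α.partSet {u : Obj | u ∉ H.objs} ∧
        s = (∑ j, c j) + d}) ∧
    (∃ f : S → S,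
      Set.BijOn f (α.invSet H)
        {s : S | ∃ (c : Fin r → S) (d : S),
          (∀ j, c j ∈ α.grpInvSet (y j) (H.arrows (y j) (y j))) ∧
          d ∈ α.partSet {u : Obj | u ∉ H.objs} ∧
          s = (∑ j, c j) + d} ∧
      (∀ a b : S, a ∈ α.invSet H → b ∈ α.invSet H → f (a + b) = f a + f b) ∧
      (∀ a b : S, a ∈ α.invSet H → b ∈ α.invSet H → f (a * b) = f a * f b)) := by
  classical
  have hYdisj' : ∀ j k, j ≠ k → ∀ u, u ∈ Y j → u ∉ Y k := by
    intro j k hjk u hj hk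
    have h1 := hYconn j u hj u hj
    rw [hYdisj j k hjk u hj u hk] at h1
    exact Set.not_nonempty_empty h1
  have hcompat : ∀ ⦃a b : Obj⦄ (h : a ⟶ b), h ∈ H.arrows a b → ∀ j, a ∈ Y j → b ∈ Y j := by
    intro a b h hh j ha
    obtain ⟨k, hbk⟩ := hYcover b (H.mem_objs_of_tgt hh)
    by_cases hjk : j = k
    · exact hjk ▸ hbk
    · exact absurd ((hYdisj j k hjk a ha b hbk) ▸ hh) (Set.notMem_empty h)
  have hpart : ∀ s : S, s = ∑ u : Obj, s * α.e (𝟙 u) := by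
    intro s
    rw [← Finset.mul_sum, hsum, mul_one]
  constructor
  · -- Part 1: the decomposition of the invariants
    ext s
    simp only [Set.mem_setOf_eq]
    constructor
    · intro hs
      refine ⟨fun j => ∑ u : Obj, if u ∈ Y j then s * α.e (𝟙 u) else 0,
              ∑ u : Obj, if u ∈ H.objs then 0 else s * α.e (𝟙 u), ?_, ?_, ?_⟩
      · intro j
        refine ⟨?_, ?_⟩
        · -- invariance under restrictTo H (Y j)
          intro a b h hh
          obtain ⟨hhH, haY, hbY⟩ := hh
          have hL : α.act h (∑ u : Obj, if u ∈ Y j then s * α.e (𝟙 u) else 0)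
              = s * α.e h := by
            rw [α.act_sum]
            have h0 : ∀ u ∈ Finset.univ, u ≠ a →
                α.act h (if u ∈ Y j then s * α.e (𝟙 u) else 0) = 0 := by
              intro u _ hu
              by_cases huY : u ∈ Y j
              · rw [if_pos huY]; exact α.act_kill horth h s hu
              · rw [if_neg huY, α.act_zero]
            rw [Finset.sum_eq_single a h0 (fun hna => absurd (Finset.mem_univ a) hna),
              if_pos haY, α.act_mul_e_src, hs h hhH]
          have hR : (∑ u : Obj, if u ∈ Y j then s * α.e (𝟙 u) else 0) * α.e h
              = s * α.e h := by
            rw [Finset.sum_mul]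
            have h0 : ∀ u ∈ Finset.univ, u ≠ b →
                (if u ∈ Y j then s * α.e (𝟙 u) else 0) * α.e h = 0 := by
              intro u _ hu
              by_cases huY : u ∈ Y j
              · rw [if_pos huY, mul_assoc, mul_comm (α.e (𝟙 u)),
                  α.e_mul_obj horth h hu, mul_zero]
              · rw [if_neg huY, zero_mul]
            rw [Finset.sum_eq_single b h0 (fun hnb => absurd (Finset.mem_univ b) hnb),
              if_pos hbY, mul_assoc, mul_comm (α.e (𝟙 b)), α.e_le]
          rw [hL, hR]
        · -- supported on Y j
          intro v hv
          rw [Finset.sum_mul]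
          refine Finset.sum_eq_zero fun u _ => ?_
          by_cases huY : u ∈ Y j
          · rw [if_pos huY, mul_assoc, horth u v (fun he => hv (he ▸ huY)), mul_zero]
          · rw [if_neg huY, zero_mul]
      · -- d supported off H.objs
        intro v hv
        have hvo : v ∈ H.objs := not_not.mp (fun h' => hv h')
        rw [Finset.sum_mul]
        refine Finset.sum_eq_zero fun u _ => ?_
        by_cases hu : u ∈ H.objs
        · rw [if_pos hu, zero_mul]
        · rw [if_neg hu, mul_assoc, horth u v (fun he => hu (he ▸ hvo)), mul_zero]
      · -- s equals the sum of the pieces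
        have key : ∀ u : Obj, (∑ j, if u ∈ Y j then s * α.e (𝟙 u) else 0)
            + (if u ∈ H.objs then 0 else s * α.e (𝟙 u)) = s * α.e (𝟙 u) := by
          intro u
          by_cases hu : u ∈ H.objs
          · obtain ⟨j, hj⟩ := hYcover u hu
            rw [if_pos hu, add_zero,
              Finset.sum_eq_single j
                (fun k _ hk => if_neg (hYdisj' j k (Ne.symm hk) u hj))
                (fun hnj => absurd (Finset.mem_univ j) hnj),
              if_pos hj]
          · rw [if_neg hu, Finset.sum_eq_zero
              (fun k _ => if_neg (fun hk => hu (hYobjs k hk))), zero_add]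
        calc s = ∑ u : Obj, s * α.e (𝟙 u) := hpart s
          _ = ∑ u : Obj, ((∑ j, if u ∈ Y j then s * α.e (𝟙 u) else 0)
              + (if u ∈ H.objs then 0 else s * α.e (𝟙 u))) :=
            Finset.sum_congr rfl fun u _ => (key u).symm
          _ = (∑ u : Obj, ∑ j, if u ∈ Y j then s * α.e (𝟙 u) else 0)
              + ∑ u : Obj, (if u ∈ H.objs then 0 else s * α.e (𝟙 u)) :=
            Finset.sum_add_distrib
          _ = (∑ j, ∑ u : Obj, if u ∈ Y j then s * α.e (𝟙 u) else 0)
              + ∑ u : Obj, (if u ∈ H.objs then 0 else s * α.e (𝟙 u)) := by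
            rw [Finset.sum_comm]
    · rintro ⟨c, d, hc, hd, rfl⟩
      intro a b h hh
      obtain ⟨j, haj⟩ := hYcover a (H.mem_objs_of_src hh)
      have hbj : b ∈ Y j := hcompat h hh j haj
      have hcompv : ∀ v : Obj, v ∈ Y j →
          ((∑ k, c k) + d) * α.e (𝟙 v) = c j * α.e (𝟙 v) := by
        intro v hvj
        rw [add_mul, Finset.sum_mul,
          Finset.sum_eq_single j
            (fun k _ hk => (hc k).2 v (hYdisj' j k (Ne.symm hk) v hvj))
            (fun hnj => absurd (Finset.mem_univ j) hnj),
          hd v (fun hvn => hvn (hYobjs j hvj)), add_zero]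
      have hinv := (hc j).1 h ⟨hh, haj, hbj⟩
      calc α.act h ((∑ k, c k) + d)
          = α.act h (((∑ k, c k) + d) * α.e (𝟙 a)) := (α.act_mul_e_src h _).symm
        _ = α.act h (c j * α.e (𝟙 a)) := by rw [hcompv a haj]
        _ = α.act h (c j) := α.act_mul_e_src h _
        _ = c j * α.e h := hinv
        _ = c j * α.e (𝟙 b) * α.e h := by
            rw [mul_assoc, mul_comm (α.e (𝟙 b)), α.e_le]
        _ = ((∑ k, c k) + d) * α.e (𝟙 b) * α.e h := by rw [hcompv b hbj]
        _ = ((∑ k, c k) + d) * α.e h := by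
            rw [mul_assoc, mul_comm (α.e (𝟙 b)), α.e_le]
  · -- Part 2: the isomorphism
    have hobjy : ∀ j, y j ∈ H.objs := fun j => hYobjs j (hy j)
    have hgt' : ∀ j : Fin r, ∃ σ : ∀ v : Obj, (H.arrows (y j) v).Nonempty → ((y j) ⟶ v),
        (∀ v hv, σ v hv ∈ H.arrows (y j) v) ∧
        (∀ h, σ (y j) h = 𝟙 (y j)) ∧
        (∀ v hv, α.e (Groupoid.inv (σ v hv)) = α.e (𝟙 (y j)) ∧
          α.e (σ v hv) = α.e (𝟙 v)) := fun j => hHgt (y j) (hobjy j)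
    choose σ hσH hσid hσe using hgt'
    have hvy : ∀ (j : Fin r) (u : Obj), u ∈ Y j → (H.arrows (y j) u).Nonempty :=
      fun j u hu => hYconn j (y j) (hy j) u hu
    have hyne : ∀ j k, j ≠ k → y j ≠ y k :=
      fun j k hjk he => absurd (he ▸ hy k) (hYdisj' j k hjk (y j) (hy j))
    set E : S := (∑ j, α.e (𝟙 (y j)))
        + ∑ u : Obj, (if u ∈ H.objs then 0 else α.e (𝟙 u)) with hE
    have hmulE : ∀ s : S, s * E = (∑ j, s * α.e (𝟙 (y j)))
        + ∑ u : Obj, (if u ∈ H.objs then 0 else s * α.e (𝟙 u)) := by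
      intro s
      rw [hE, mul_add, Finset.mul_sum, Finset.mul_sum]
      congr 1
      refine Finset.sum_congr rfl fun u _ => ?_
      split
      · rw [mul_zero]
      · rfl
    have hEy : ∀ (s : S) (j : Fin r), (s * E) * α.e (𝟙 (y j)) = s * α.e (𝟙 (y j)) := by
      intro s j
      rw [hmulE s, add_mul, Finset.sum_mul,
        Finset.sum_eq_single j
          (fun k _ hk => by beta_reduce; rw [mul_assoc, horth (y k) (y j) (hyne k j hk), mul_zero])
          (fun hnj => absurd (Finset.mem_univ j) hnj),
        Finset.sum_mul,
        Finset.sum_eq_zero (f := fun u =>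
          (if u ∈ H.objs then 0 else s * α.e (𝟙 u)) * α.e (𝟙 (y j)))
          (fun u _ => by
            beta_reduce
            by_cases hu : u ∈ H.objs
            · rw [if_pos hu, zero_mul]
            · rw [if_neg hu, mul_assoc, horth u (y j) (fun he => hu (he ▸ hobjy j)),
                mul_zero]),
        add_zero, mul_assoc, α.idem]
    have hEu : ∀ (s : S) (u : Obj), u ∉ H.objs →
        (s * E) * α.e (𝟙 u) = s * α.e (𝟙 u) := by
      intro s u hu
      rw [hmulE s, add_mul, Finset.sum_mul,
        Finset.sum_eq_zero (f := fun k => s * α.e (𝟙 (y k)) * α.e (𝟙 u))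
          (fun k _ => by
            beta_reduce
            rw [mul_assoc, horth (y k) u (fun he => hu (he ▸ hobjy k)), mul_zero]),
        zero_add, Finset.sum_mul,
        Finset.sum_eq_single u
          (fun v _ hv => by
            beta_reduce
            by_cases hvo : v ∈ H.objs
            · rw [if_pos hvo, zero_mul]
            · rw [if_neg hvo, mul_assoc, horth v u hv, mul_zero])
          (fun hnu => absurd (Finset.mem_univ u) hnu),
        if_neg hu, mul_assoc, α.idem]
    have hEE : E * E = E := by
      have h1 : ∀ j, E * α.e (𝟙 (y j)) = α.e (𝟙 (y j)) := by
        intro j; have := hEy 1 j; rwa [one_mul, one_mul] at this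
      have h2 : ∀ u, u ∉ H.objs → E * α.e (𝟙 u) = α.e (𝟙 u) := by
        intro u hu; have := hEu 1 u hu; rwa [one_mul, one_mul] at this
      rw [hmulE E]
      conv_rhs => rw [hE]
      congr 1
      · exact Finset.sum_congr rfl fun j _ => h1 j
      · refine Finset.sum_congr rfl fun u _ => ?_
        by_cases hu : u ∈ H.objs
        · rw [if_pos hu, if_pos hu]
        · rw [if_neg hu, if_neg hu, h2 u hu]
    refine ⟨fun s => s * E, ⟨?_, ?_, ?_⟩, fun a b _ _ => add_mul a b E,
      fun a b _ _ => by
        show a * b * E = a * E * (b * E)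
        calc a * b * E = a * b * (E * E) := by rw [hEE]
          _ = a * E * (b * E) := by ring⟩
    · -- MapsTo
      intro s hs
      refine ⟨fun j => s * α.e (𝟙 (y j)),
        ∑ u : Obj, if u ∈ H.objs then 0 else s * α.e (𝟙 u), ?_, ?_, ?_⟩
      · intro j
        refine ⟨by rw [mul_assoc, α.idem], ?_⟩
        intro g hg
        have hL : α.act g (s * α.e (𝟙 (y j))) = s * α.e g := by
          rw [α.act_mul, hs g hg, α.act_e_src, mul_assoc, α.idem]
        have hR : s * α.e (𝟙 (y j)) * α.e g = s * α.e g := by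
          rw [mul_assoc, mul_comm (α.e (𝟙 (y j))), α.e_le]
        rw [hL, hR]
      · intro v hv
        have hvo : v ∈ H.objs := not_not.mp (fun h' => hv h')
        rw [Finset.sum_mul]
        refine Finset.sum_eq_zero fun u _ => ?_
        by_cases hu : u ∈ H.objs
        · rw [if_pos hu, zero_mul]
        · rw [if_neg hu, mul_assoc, horth u v (fun he => hu (he ▸ hvo)), mul_zero]
      · exact hmulE s
    · -- InjOn
      intro s hs s' hs' heq
      have heq' : s * E = s' * E := heq
      have hw : s - s' ∈ α.invSet H := by
        rw [sub_eq_add_neg]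
        exact α.invSet_add_mem H hs (α.invSet_neg_mem H hs')
      have hwE : (s - s') * E = 0 := by rw [sub_mul, heq', sub_self]
      have hzero : ∀ u : Obj, (s - s') * α.e (𝟙 u) = 0 := by
        intro u
        by_cases hu : u ∈ H.objs
        · obtain ⟨j, huj⟩ := hYcover u hu
          have h1 : (s - s') * α.e (𝟙 (y j)) = 0 := by
            rw [← hEy (s - s') j, hwE, zero_mul]
          have h2 : α.act (σ j u (hvy j u huj)) (s - s') = 0 := by
            rw [← α.act_proj (σ j u (hvy j u huj)) (s - s'),
              (hσe j u (hvy j u huj)).1, h1, α.act_zero]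
          have h3 := hw (σ j u (hvy j u huj)) (hσH j u (hvy j u huj))
          rw [h3, (hσe j u (hvy j u huj)).2] at h2
          exact h2
        · rw [← hEu (s - s') u hu, hwE, zero_mul]
      have hsub : s - s' = 0 := by
        rw [hpart (s - s')]
        exact Finset.sum_eq_zero fun u _ => hzero u
      exact sub_eq_zero.mp hsub
    · -- SurjOn
      intro t ht
      obtain ⟨c, d, hc, hd, rfl⟩ := ht
      set s0 : S := (∑ j, ∑ u : Obj,
          if hu : u ∈ Y j then α.act (σ j u (hvy j u hu)) (c j) else 0) + d with hs0
      have hterm : ∀ (v : Obj) (k : Fin r) (u : Obj), ¬(u = v ∧ v ∈ Y k) →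
          (if hu : u ∈ Y k then α.act (σ k u (hvy k u hu)) (c k) else 0)
            * α.e (𝟙 v) = 0 := by
        intro v k u hne
        by_cases hu : u ∈ Y k
        · rw [dif_pos hu]
          exact α.act_support horth _ _
            (fun he => hne ⟨he.symm, by rw [he]; exact hu⟩)
        · rw [dif_neg hu, zero_mul]
      have hsv : ∀ (k : Fin r) (v : Obj) (hv : v ∈ Y k),
          s0 * α.e (𝟙 v) = α.act (σ k v (hvy k v hv)) (c k) := by
        intro k v hv
        rw [hs0, add_mul, hd v (fun hn => hn (hYobjs k hv)), add_zero, Finset.sum_mul,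
          Finset.sum_eq_single k
            (fun k' _ hk' => by
              rw [Finset.sum_mul]
              exact Finset.sum_eq_zero fun u _ => hterm v k' u
                (fun hp => hYdisj' k k' (Ne.symm hk') v hv hp.2))
            (fun hnk => absurd (Finset.mem_univ k) hnk),
          Finset.sum_mul,
          Finset.sum_eq_single v (fun u _ hu => hterm v k u (fun hp => hu hp.1))
            (fun hnv => absurd (Finset.mem_univ v) hnv),
          dif_pos hv, ← (hσe k v (hvy k v hv)).2, α.act_mem]
      have hsu : ∀ v : Obj, v ∉ H.objs → s0 * α.e (𝟙 v) = d * α.e (𝟙 v) := by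
        intro v hv
        rw [hs0, add_mul]
        have hz : (∑ j, ∑ u : Obj,
            if hu : u ∈ Y j then α.act (σ j u (hvy j u hu)) (c j) else 0)
              * α.e (𝟙 v) = 0 := by
          rw [Finset.sum_mul]
          refine Finset.sum_eq_zero fun k _ => ?_
          rw [Finset.sum_mul]
          exact Finset.sum_eq_zero fun u _ => hterm v k u
            (fun hp => hv (hYobjs k hp.2))
        rw [hz, zero_add]
      have hs0inv : s0 ∈ α.invSet H := by
        intro a b h hh
        obtain ⟨j, haj⟩ := hYcover a (H.mem_objs_of_src hh)
        have hbj : b ∈ Y j := hcompat h hh j haj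
        have hk : (σ j a (hvy j a haj) ≫ h ≫ Groupoid.inv (σ j b (hvy j b hbj)))
            ∈ H.arrows (y j) (y j) :=
          H.mul (hσH j a (hvy j a haj)) (H.mul hh (H.inv (hσH j b (hvy j b hbj))))
        have htr := α.transport (σ j a (hvy j a haj)) (σ j b (hvy j b hbj)) h
          (hσe j a (hvy j a haj)).2 (hσe j b (hvy j b hbj)).2 (c j) ((hc j).2 _ hk)
        calc α.act h s0 = α.act h (s0 * α.e (𝟙 a)) := (α.act_mul_e_src h s0).symm
          _ = α.act h (α.act (σ j a (hvy j a haj)) (c j)) := by rw [hsv j a haj]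
          _ = α.act (σ j b (hvy j b hbj)) (c j) * α.e h := htr
          _ = (s0 * α.e (𝟙 b)) * α.e h := by rw [hsv j b hbj]
          _ = s0 * α.e h := by rw [mul_assoc, mul_comm (α.e (𝟙 b)), α.e_le]
      refine ⟨s0, hs0inv, ?_⟩
      show s0 * E = (∑ j, c j) + d
      rw [hmulE s0]
      congr 1
      · refine Finset.sum_congr rfl fun j _ => ?_
        rw [hsv j (y j) (hy j), hσid j (hvy j (y j) (hy j)), α.act_id, (hc j).1]
      · have hd1 : d = ∑ u : Obj, if u ∈ H.objs then 0 else d * α.e (𝟙 u) := by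
          calc d = ∑ u : Obj, d * α.e (𝟙 u) := hpart d
            _ = _ := Finset.sum_congr rfl fun u _ => by
              by_cases hu : u ∈ H.objs
              · rw [if_pos hu]
                exact hd u (fun hn => hn hu)
              · rw [if_neg hu]
        calc (∑ u : Obj, if u ∈ H.objs then 0 else s0 * α.e (𝟙 u))
            = ∑ u : Obj, (if u ∈ H.objs then 0 else d * α.e (𝟙 u)) := by
              refine Finset.sum_congr rfl fun u _ => ?_
              by_cases hu : u ∈ H.objs
              · rw [if_pos hu, if_pos hu]
              · rw [if_neg hu, if_neg hu, hsu u hu]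
          _ = d := hd1.symm

end PaperGalois
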